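/- Let n ≥ 0 and w ≥ 0 be integers, take ℓ = 1, and set λ = −w(w+n+3) and μ = λ(n−1). Define the polynomials h_1(t) = Σ_{j=0}^{w} [(−w)_j (w+n+3)_j / (j! (n+1)_j)] t^j and h_0(t) = (1 − λ/(n+1)) · Σ_{j=0}^{w} [(−w)_j (w+n+3)_j (λ−n)_j / (j! (n+2)_j (λ−n−1)_j)] t^j. Then the pair (h_0, h_1) satisfies system (D') with eigenvalue λ and system (E') with eigenvalue μ for all t ∈ (0,1). -/

import Mathlib

open Finset Polynomial

private lemma poch_left_eval (x : ℝ) (j : ℕ) :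
    (ascPochhammer ℝ (j+1)).eval x = x * (ascPochhammer ℝ j).eval (x+1) := by
  rw [ascPochhammer_succ_left]
  simp [Polynomial.eval_comp]

private lemma poch_ne_of_neg {x : ℝ} {j : ℕ} (h : ∀ k : ℕ, k < j → x + k ≠ 0) :
    (ascPochhammer ℝ j).eval x ≠ 0 := by
  induction j with
  | zero => simp
  | succ j ih =>
    rw [ascPochhammer_succ_eval]
    exact mul_ne_zero (ih fun k hk => h k (hk.trans (Nat.lt_succ_self j)))
      (h j (Nat.lt_succ_self j))

noncomputable def Ac (n w : ℕ) (j : ℕ) : ℝ :=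
  ((ascPochhammer ℝ j).eval (-(w : ℝ)) * (ascPochhammer ℝ j).eval ((w : ℝ) + n + 3))
    / ((j.factorial : ℝ) * (ascPochhammer ℝ j).eval ((n : ℝ) + 1))

noncomputable def Bc (n w : ℕ) (lam : ℝ) (j : ℕ) : ℝ :=
  (1 - lam / ((n : ℝ) + 1)) *
    (((ascPochhammer ℝ j).eval (-(w : ℝ)) * (ascPochhammer ℝ j).eval ((w : ℝ) + n + 3)
        * (ascPochhammer ℝ j).eval (lam - (n : ℝ)))
      / ((j.factorial : ℝ) * (ascPochhammer ℝ j).eval ((n : ℝ) + 2)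
        * (ascPochhammer ℝ j).eval (lam - (n : ℝ) - 1)))

lemma Ac_zero {n w j : ℕ} (hj : w < j) : Ac n w j = 0 := by
  unfold Ac
  rw [ascPochhammer_eval_neg_coe_nat_of_lt hj]
  simp

lemma Bc_zero {n w j : ℕ} (lam : ℝ) (hj : w < j) : Bc n w lam j = 0 := by
  unfold Bc
  rw [ascPochhammer_eval_neg_coe_nat_of_lt hj]
  simp

lemma hF1 (n w j : ℕ) :
    Ac n w (j+1) * (((j:ℝ)+1) * ((n:ℝ)+1+(j:ℝ))) =
      Ac n w j * ((j:ℝ)*((j:ℝ)+(n:ℝ)+3) + -(w : ℝ) * ((w : ℝ) + n + 3)) := by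
  have hfac : ((j.factorial : ℕ) : ℝ) ≠ 0 := by
    exact_mod_cast j.factorial_pos.ne'
  have hp : (0:ℝ) < (ascPochhammer ℝ j).eval ((n:ℝ)+1) :=
    ascPochhammer_pos j _ (by positivity)
  have hj1 : ((j:ℝ)+1) ≠ 0 := by positivity
  have hc : ((n:ℝ)+1+(j:ℝ)) ≠ 0 := by positivity
  unfold Ac
  rw [ascPochhammer_succ_eval, ascPochhammer_succ_eval, ascPochhammer_succ_eval,
    Nat.factorial_succ]
  push_cast
  field_simp
  ring

lemma hF2 (n w : ℕ) (lam : ℝ) (hlam : lam = -(w : ℝ) * ((w : ℝ) + n + 3)) {j : ℕ}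
    (hj : j ≤ w + 1) :
    Bc n w lam j * ((n:ℝ)+1+(j:ℝ)) = Ac n w j * ((n:ℝ)+1-(j:ℝ)-lam) := by
  have hw0 : (0:ℝ) ≤ (w:ℝ) := Nat.cast_nonneg w
  have hn0 : (0:ℝ) ≤ (n:ℝ) := Nat.cast_nonneg n
  have hd : lam - (n:ℝ) - 1 ≠ 0 := by nlinarith
  have hq0 : (ascPochhammer ℝ j).eval (lam - (n:ℝ) - 1) ≠ 0 := by
    apply poch_ne_of_neg
    intro k hk
    have hkw : (k:ℝ) ≤ (w:ℝ) := by
      exact_mod_cast Nat.lt_succ_iff.mp (lt_of_lt_of_le hk hj)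
    nlinarith
  have hfac : ((j.factorial : ℕ) : ℝ) ≠ 0 := by exact_mod_cast j.factorial_pos.ne'
  have hp1 : (0:ℝ) < (ascPochhammer ℝ j).eval ((n:ℝ)+1) :=
    ascPochhammer_pos j _ (by positivity)
  have hn1 : ((n:ℝ)+1) ≠ 0 := by positivity
  have hc : ((n:ℝ)+1+(j:ℝ)) ≠ 0 := by positivity
  have e1 := ascPochhammer_succ_eval j ((n:ℝ)+1)
  have e2 := poch_left_eval ((n:ℝ)+1) j
  rw [show (n:ℝ)+1+1 = (n:ℝ)+2 by ring] at e2
  have hp2 : (ascPochhammer ℝ j).eval ((n:ℝ)+2)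
      = (ascPochhammer ℝ j).eval ((n:ℝ)+1) * ((n:ℝ)+1+(j:ℝ)) / ((n:ℝ)+1) := by
    rw [eq_div_iff hn1]
    linear_combination e1 - e2
  have e3 := ascPochhammer_succ_eval j (lam - (n:ℝ) - 1)
  have e4 := poch_left_eval (lam - (n:ℝ) - 1) j
  rw [show lam - (n:ℝ) - 1 + 1 = lam - (n:ℝ) by ring] at e4
  have hq1 : (ascPochhammer ℝ j).eval (lam - (n:ℝ))
      = (ascPochhammer ℝ j).eval (lam - (n:ℝ) - 1) * (lam - (n:ℝ) - 1 + (j:ℝ))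
          / (lam - (n:ℝ) - 1) := by
    rw [eq_div_iff hd]
    linear_combination e3 - e4
  unfold Bc Ac
  rw [hp2, hq1]
  field_simp
  ring

private lemma sum_deriv (c : ℕ → ℝ) (N : ℕ) (t : ℝ) :
    deriv (fun x : ℝ => ∑ j ∈ Finset.range N, c j * x ^ j) t
      = ∑ j ∈ Finset.range N, c j * ((j:ℝ) * t ^ (j-1)) := by
  rw [deriv_fun_sum (fun j _ => (differentiableAt_pow j).const_mul (c j))]
  refine Finset.sum_congr rfl fun j _ => ?_
  rw [deriv_const_mul (c j) (differentiableAt_pow j), deriv_pow_field]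

private lemma sum_shift (c : ℕ → ℝ) (N : ℕ) (t : ℝ) (hc : c (N+1) = 0) :
    ∑ j ∈ Finset.range (N+1), c j * ((j:ℝ) * t ^ (j-1))
      = ∑ j ∈ Finset.range (N+1), (((j:ℝ)+1) * c (j+1)) * t ^ j := by
  rw [Finset.sum_range_succ' (fun j => c j * ((j:ℝ) * t ^ (j-1))) N,
    Finset.sum_range_succ (fun j => (((j:ℝ)+1) * c (j+1)) * t ^ j) N, hc]
  simp only [Nat.cast_zero, zero_mul, mul_zero, add_zero]
  refine Finset.sum_congr rfl fun j _ => ?_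
  rw [Nat.add_sub_cancel]
  push_cast
  ring

private lemma sum_tmul (c : ℕ → ℝ) (N : ℕ) (t : ℝ) :
    t * ∑ j ∈ Finset.range N, c j * ((j:ℝ) * t ^ (j-1))
      = ∑ j ∈ Finset.range N, ((j:ℝ) * c j) * t ^ j := by
  rw [Finset.mul_sum]
  refine Finset.sum_congr rfl fun j _ => ?_
  cases j with
  | zero => simp
  | succ m =>
    rw [Nat.add_sub_cancel]
    push_cast
    ring

private lemma sum_tmul0 (d e : ℕ → ℝ) (N : ℕ) (t : ℝ) (h0 : e 0 = 0)
    (hde : ∀ j, e (j+1) = d j) (htop : d N = 0) :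
    t * ∑ j ∈ Finset.range (N+1), d j * t ^ j
      = ∑ j ∈ Finset.range (N+1), e j * t ^ j := by
  rw [Finset.mul_sum, Finset.sum_range_succ (fun j => t * (d j * t ^ j)) N,
    Finset.sum_range_succ' (fun j => e j * t ^ j) N, htop, h0]
  simp only [mul_zero, zero_mul, add_zero]
  refine Finset.sum_congr rfl fun j _ => ?_
  rw [hde]
  ring

theorem stmt13 (n w : ℕ) (lam mu : ℝ)
    (hlam : lam = -(w : ℝ) * ((w : ℝ) + n + 3))
    (hmu : mu = lam * ((n : ℝ) - 1))
    (h : ℕ → ℝ → ℝ)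
    (h1def : ∀ t : ℝ, h 1 t =
      ∑ j ∈ Finset.range (w + 1),
        ((ascPochhammer ℝ j).eval (-(w : ℝ)) * (ascPochhammer ℝ j).eval ((w : ℝ) + n + 3))
          / ((j.factorial : ℝ) * (ascPochhammer ℝ j).eval ((n : ℝ) + 1)) * t ^ j)
    (h0def : ∀ t : ℝ, h 0 t =
      (1 - lam / ((n : ℝ) + 1)) *
        ∑ j ∈ Finset.range (w + 1),
          ((ascPochhammer ℝ j).eval (-(w : ℝ)) * (ascPochhammer ℝ j).eval ((w : ℝ) + n + 3)
              * (ascPochhammer ℝ j).eval (lam - (n : ℝ)))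
            / ((j.factorial : ℝ) * (ascPochhammer ℝ j).eval ((n : ℝ) + 2)
              * (ascPochhammer ℝ j).eval (lam - (n : ℝ) - 1)) * t ^ j) :
    (∀ i ≤ 1, ∀ t : ℝ, 0 < t → t < 1 →
      t * (1 - t) * deriv (deriv (h i)) t
        - (((n : ℝ) + 1 - i + 3) * t - ((n : ℝ) + 1 - i + 1)) * deriv (h i) t
        + ((1 : ℝ) - i) * ((i : ℝ) + 1) * (h (i + 1) t - h i t) / (1 - t)
        - (i : ℝ) * ((1 : ℝ) - i + 1) * t * (h i t - h (i - 1) t) / (1 - t)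
        = lam * h i t) ∧
    (∀ i ≤ 1, ∀ t : ℝ, 0 < t → t < 1 →
      ((n : ℝ) - 1 + 3 * i) * t * (1 - t) * deriv (deriv (h i)) t
        - 3 * ((i : ℝ) + 1) * ((1 : ℝ) - i) * deriv (h (i + 1)) t
        + ((n : ℝ) - 1 + 3 * i) * (((n : ℝ) + 1 - i + 1) - ((n : ℝ) + 1 - i + 3) * t)
            * deriv (h i) t
        + 3 * (i : ℝ) * ((1 : ℝ) - i + 1) * t * deriv (h (i - 1)) t
        + ((n : ℝ) + 2 - 3 * i) * ((i : ℝ) + 1) * ((1 : ℝ) - i)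
            * (h (i + 1) t - h i t) / (1 - t)
        - ((n : ℝ) + 2 - 3 * i) * (i : ℝ) * ((1 : ℝ) - i + 1)
            * (h i t - h (i - 1) t) / (1 - t)
        - (2 * (n : ℝ) + 1 + 3) * (i : ℝ) * ((1 : ℝ) - i + 1) * (h i t - h (i - 1) t)
        = mu * h i t) := by
  subst hmu
  have hf1 : h 1 = fun x : ℝ => ∑ j ∈ Finset.range (w+1), Ac n w j * x ^ j := by
    funext x
    rw [h1def x]
    rfl
  have hf0 : h 0 = fun x : ℝ => ∑ j ∈ Finset.range (w+1), Bc n w lam j * x ^ j := by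
    funext x
    rw [h0def x, Finset.mul_sum]
    exact Finset.sum_congr rfl fun j _ => (mul_assoc _ _ _).symm
  have hAz : Ac n w (w+1) = 0 := Ac_zero (Nat.lt_succ_self w)
  have hBz : Bc n w lam (w+1) = 0 := Bc_zero lam (Nat.lt_succ_self w)
  have d1f : deriv (h 1) = fun x : ℝ =>
      ∑ j ∈ Finset.range (w+1), (((j:ℝ)+1) * Ac n w (j+1)) * x ^ j := by
    funext x
    rw [hf1, sum_deriv, sum_shift _ w x hAz]
  have d0f : deriv (h 0) = fun x : ℝ =>
      ∑ j ∈ Finset.range (w+1), (((j:ℝ)+1) * Bc n w lam (j+1)) * x ^ j := by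
    funext x
    rw [hf0, sum_deriv, sum_shift _ w x hBz]
  have e1 : ∀ j : ℕ, Ac n w (j+1) * (((j:ℝ)+1) * ((n:ℝ)+1+(j:ℝ)))
      = Ac n w j * ((j:ℝ)*((j:ℝ)+(n:ℝ)+3) + lam) := by
    intro j
    have := hF1 n w j
    rw [← hlam] at this
    exact this
  have e2 : ∀ j, j ≤ w+1 → Bc n w lam j * ((n:ℝ)+1+(j:ℝ))
      = Ac n w j * ((n:ℝ)+1-(j:ℝ)-lam) := fun j hj => hF2 n w lam hlam hj
  have hcj : ∀ j : ℕ, ((n:ℝ)+1+(j:ℝ)) ≠ 0 := fun j => by positivity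
  have key : ∀ t : ℝ,
      ((1 - t) * deriv (h 1) t = h 1 t - h 0 t) ∧
      (t * deriv (deriv (h 1)) t - t^2 * deriv (deriv (h 1)) t
        - (((n:ℝ)+4) * (t * deriv (h 1) t) - ((n:ℝ)+1) * deriv (h 1) t)
        = lam * h 1 t) ∧
      (t * deriv (deriv (h 0)) t - t^2 * deriv (deriv (h 0)) t
        - (((n:ℝ)+4) * (t * deriv (h 0) t) - ((n:ℝ)+2) * deriv (h 0) t)
        + deriv (h 1) t = lam * h 0 t) ∧
      (((n:ℝ)+2) * (t * deriv (h 1) t) + t * deriv (h 0) t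
        - ((n:ℝ)+1) * deriv (h 1) t + lam * h 1 t = 0) := by
    intro t
    have hv1 : h 1 t = ∑ j ∈ Finset.range (w+1), Ac n w j * t ^ j := by rw [hf1]
    have hv0 : h 0 t = ∑ j ∈ Finset.range (w+1), Bc n w lam j * t ^ j := by rw [hf0]
    have d1v : deriv (h 1) t
        = ∑ j ∈ Finset.range (w+1), (((j:ℝ)+1) * Ac n w (j+1)) * t ^ j := by rw [d1f]
    have d0v : deriv (h 0) t
        = ∑ j ∈ Finset.range (w+1), (((j:ℝ)+1) * Bc n w lam (j+1)) * t ^ j := by rw [d0f]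
    have td1 : t * deriv (h 1) t
        = ∑ j ∈ Finset.range (w+1), ((j:ℝ) * Ac n w j) * t ^ j := by
      rw [hf1, sum_deriv, sum_tmul]
    have td0 : t * deriv (h 0) t
        = ∑ j ∈ Finset.range (w+1), ((j:ℝ) * Bc n w lam j) * t ^ j := by
      rw [hf0, sum_deriv, sum_tmul]
    have tdd1 : t * deriv (deriv (h 1)) t
        = ∑ j ∈ Finset.range (w+1), ((j:ℝ) * (((j:ℝ)+1) * Ac n w (j+1))) * t ^ j := by
      rw [d1f, sum_deriv, sum_tmul]
    have tdd0 : t * deriv (deriv (h 0)) t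
        = ∑ j ∈ Finset.range (w+1), ((j:ℝ) * (((j:ℝ)+1) * Bc n w lam (j+1))) * t ^ j := by
      rw [d0f, sum_deriv, sum_tmul]
    have t2dd1 : t^2 * deriv (deriv (h 1)) t
        = ∑ j ∈ Finset.range (w+1), ((j:ℝ) * ((j:ℝ)-1) * Ac n w j) * t ^ j := by
      rw [pow_two, mul_assoc, tdd1,
        sum_tmul0 (fun j => (j:ℝ) * (((j:ℝ)+1) * Ac n w (j+1)))
          (fun j => (j:ℝ) * ((j:ℝ)-1) * Ac n w j) w t (by norm_num)
          (fun j => by push_cast; ring) (by simp [hAz])]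
    have t2dd0 : t^2 * deriv (deriv (h 0)) t
        = ∑ j ∈ Finset.range (w+1), ((j:ℝ) * ((j:ℝ)-1) * Bc n w lam j) * t ^ j := by
      rw [pow_two, mul_assoc, tdd0,
        sum_tmul0 (fun j => (j:ℝ) * (((j:ℝ)+1) * Bc n w lam (j+1)))
          (fun j => (j:ℝ) * ((j:ℝ)-1) * Bc n w lam j) w t (by norm_num)
          (fun j => by push_cast; ring) (by simp [hBz])]
    refine ⟨?_, ?_, ?_, ?_⟩
    · rw [sub_mul, one_mul, td1, d1v, hv1, hv0, ← Finset.sum_sub_distrib,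
        ← Finset.sum_sub_distrib]
      refine Finset.sum_congr rfl fun j hj => ?_
      have hjw : j ≤ w := Nat.lt_succ_iff.mp (Finset.mem_range.mp hj)
      refine mul_right_cancel₀ (hcj j) ?_
      linear_combination (t^j) * e1 j + (t^j) * e2 j (le_trans hjw (Nat.le_succ w))
    · rw [tdd1, t2dd1, td1, d1v, hv1, Finset.mul_sum, Finset.mul_sum, Finset.mul_sum,
        ← Finset.sum_sub_distrib, ← Finset.sum_sub_distrib, ← Finset.sum_sub_distrib]
      refine Finset.sum_congr rfl fun j hj => ?_
      linear_combination (t^j) * e1 j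
    · rw [tdd0, t2dd0, td0, d0v, d1v, hv0, Finset.mul_sum, Finset.mul_sum, Finset.mul_sum,
        ← Finset.sum_sub_distrib, ← Finset.sum_sub_distrib, ← Finset.sum_sub_distrib,
        ← Finset.sum_add_distrib]
      refine Finset.sum_congr rfl fun j hj => ?_
      have hjw : j ≤ w := Nat.lt_succ_iff.mp (Finset.mem_range.mp hj)
      have e2j := e2 j (le_trans hjw (Nat.le_succ w))
      have e2j' := e2 (j+1) (Nat.succ_le_succ hjw)
      push_cast at e2j'
      refine mul_right_cancel₀ (hcj j) ?_
      linear_combination (((j:ℝ)+1) * ((n:ℝ)+1+(j:ℝ)) * t^j) * e2j'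
        + (((n:ℝ)+1-(j:ℝ)-lam) * t^j) * e1 j
        - (((j:ℝ)*((j:ℝ)+(n:ℝ)+3)+lam) * t^j) * e2j
    · rw [td1, td0, d1v, hv1, Finset.mul_sum, Finset.mul_sum, Finset.mul_sum,
        ← Finset.sum_add_distrib, ← Finset.sum_sub_distrib, ← Finset.sum_add_distrib]
      refine Finset.sum_eq_zero fun j hj => ?_
      have hjw : j ≤ w := Nat.lt_succ_iff.mp (Finset.mem_range.mp hj)
      have e2j := e2 j (le_trans hjw (Nat.le_succ w))
      refine mul_right_cancel₀ (hcj j) ?_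
      linear_combination ((j:ℝ) * t^j) * e2j - (((n:ℝ)+1) * t^j) * e1 j
  constructor
  · intro i hi t ht0 ht1
    obtain ⟨I1, I2, I3, I4⟩ := key t
    have hone : (1:ℝ) - t ≠ 0 := ne_of_gt (by linarith)
    have hu : (1 - t) * (1 - t)⁻¹ = 1 := mul_inv_cancel₀ hone
    interval_cases i
    · simp only [div_eq_mul_inv]
      norm_num
      linear_combination I3 - (1-t)⁻¹ * I1 + deriv (h 1) t * hu
    · simp only [div_eq_mul_inv]
      norm_num
      linear_combination I2 + t * (1-t)⁻¹ * I1 - t * deriv (h 1) t * hu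
  · intro i hi t ht0 ht1
    obtain ⟨I1, I2, I3, I4⟩ := key t
    have hone : (1:ℝ) - t ≠ 0 := ne_of_gt (by linarith)
    have hu : (1 - t) * (1 - t)⁻¹ = 1 := mul_inv_cancel₀ hone
    interval_cases i
    · simp only [div_eq_mul_inv]
      norm_num
      linear_combination ((n:ℝ)-1) * I3 - ((n:ℝ)+2) * (1-t)⁻¹ * I1
        + ((n:ℝ)+2) * deriv (h 1) t * hu
    · simp only [div_eq_mul_inv]
      norm_num
      linear_combination ((n:ℝ)+2) * I2 + 3 * I4 + (2*(n:ℝ)+4) * I1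
        + ((n:ℝ)-1) * (1-t)⁻¹ * I1 - ((n:ℝ)-1) * deriv (h 1) t * hu
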